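/- Let θ > 0, K ≥ 0, R > K and ε ≥ 0. Let W be continuous on [K, R] with W(x) ≥ 2·θ² for all x ∈ [K, R], and let φ be a C² function on [K, R] with φ(R) = 0 satisfying |−φ''(x) + W(x)·φ(x)| ≤ ε·e^{−θ·x} for all x ∈ [K, R]. Then |φ(x)| ≤ (|φ(K)| + ε/θ²)·e^{−θ·(x − K)} for every x ∈ [K, R]. -/

import Mathlib

open Set

set_option maxHeartbeats 1000000

/-- One-sided barrier bound with a slack `δ > 0`. -/
lemma barrier_aux
    (θ K R ε δ : ℝ) (hθ : 0 < θ) (hK : 0 ≤ K) (hKR : K < R) (hε : 0 ≤ ε) (hδ : 0 < δ)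
    (W φ : ℝ → ℝ)
    (hWlow : ∀ x ∈ Set.Icc K R, 2 * θ ^ 2 ≤ W x)
    (hφ : ContDiffOn ℝ 2 φ (Set.Icc K R))
    (hφR : φ R = 0)
    (hineq : ∀ x ∈ Set.Icc K R,
      |(-derivWithin (derivWithin φ (Set.Icc K R)) (Set.Icc K R) x + W x * φ x)|
        ≤ ε * Real.exp (-θ * x)) :
    ∀ x ∈ Set.Icc K R,
      φ x ≤ (|φ K| + ε / θ ^ 2 + δ) * Real.exp (-θ * (x - K)) := by
  set s : Set ℝ := Set.Icc K R with hs
  set M : ℝ := |φ K| + ε / θ ^ 2 + δ with hM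
  have hθ2 : (0:ℝ) < θ ^ 2 := by positivity
  have hMpos : 0 < M := by
    have h1 := abs_nonneg (φ K); have h2 := div_nonneg hε hθ2.le
    simp only [hM]; linarith
  set B : ℝ → ℝ := fun x => M * Real.exp (-θ * (x - K)) with hBdef
  have hBpos : ∀ x, 0 < B x := fun x => by positivity
  have hBderiv : ∀ x : ℝ, HasDerivAt B (-θ * B x) x := by
    intro x
    have h1 : HasDerivAt (fun y : ℝ => -θ * (y - K)) (-θ) x := by
      simpa using ((hasDerivAt_id x).sub_const K).const_mul (-θ)
    have h2 := (h1.exp).const_mul M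
    convert h2 using 1
    show -θ * (M * Real.exp (-θ * (x - K))) = M * (Real.exp (-θ * (x - K)) * -θ); ring
    all_goals rfl
  set ψ : ℝ → ℝ := fun x => φ x - B x with hψdef
  set f : ℝ → ℝ := derivWithin φ s with hfdef
  set f' : ℝ → ℝ := derivWithin f s with hf'def
  have huniq : UniqueDiffOn ℝ s := uniqueDiffOn_Icc hKR
  have hφ1 : ∀ x ∈ s, HasDerivWithinAt φ (f x) s x := fun x hx =>
    (hφ.differentiableOn (by norm_num) x hx).hasDerivWithinAt
  have hfC : ContDiffOn ℝ 1 f s := hφ.derivWithin huniq (by norm_num)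
  have hφ2 : ∀ x ∈ s, HasDerivWithinAt f (f' x) s x := fun x hx =>
    (hfC.differentiableOn (by norm_num) x hx).hasDerivWithinAt
  have hψcont : ContinuousOn ψ s :=
    (hφ.continuousOn).sub (Continuous.continuousOn (by fun_prop))
  intro x hx
  by_contra hcon
  push_neg at hcon
  have hψx : 0 < ψ x := by simp only [hψdef, hBdef]; linarith
  have hψK : ψ K < 0 := by
    have h1 : φ K ≤ |φ K| := le_abs_self _
    have hBK : B K = M := by simp [hBdef]
    have hd : 0 < ε / θ ^ 2 + δ := by positivity
    simp only [hψdef]; rw [hBK]; simp only [hM]; linarith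
  have hψR : ψ R < 0 := by
    have := hBpos R; simp only [hψdef, hφR]; linarith
  have hxK : K < x := by
    rcases eq_or_lt_of_le hx.1 with h | h
    · exact absurd hψx (by rw [← h]; linarith)
    · exact h
  have hxR : x < R := by
    rcases eq_or_lt_of_le hx.2 with h | h
    · exact absurd hψx (by rw [h]; linarith)
    · exact h
  -- greatest zero-crossing to the left of x
  have hS1 : IsCompact {y ∈ Set.Icc K x | ψ y ≤ 0} := by
    apply IsCompact.of_isClosed_subset isCompact_Icc _ (fun y hy => hy.1)
    have he : {y ∈ Set.Icc K x | ψ y ≤ 0} = Set.Icc K x ∩ ψ ⁻¹' Set.Iic 0 := by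
      ext y; simp [Set.mem_Iic, Set.mem_sep_iff]
    rw [he]
    exact ContinuousOn.preimage_isClosed_of_isClosed
      (hψcont.mono (Set.Icc_subset_Icc le_rfl hx.2)) isClosed_Icc isClosed_Iic
  obtain ⟨a, haS, haGr⟩ := hS1.exists_isGreatest
    ⟨K, ⟨le_rfl, hxK.le⟩, hψK.le⟩
  -- least zero-crossing to the right of x
  have hS2 : IsCompact {y ∈ Set.Icc x R | ψ y ≤ 0} := by
    apply IsCompact.of_isClosed_subset isCompact_Icc _ (fun y hy => hy.1)
    have he : {y ∈ Set.Icc x R | ψ y ≤ 0} = Set.Icc x R ∩ ψ ⁻¹' Set.Iic 0 := by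
      ext y; simp [Set.mem_Iic, Set.mem_sep_iff]
    rw [he]
    exact ContinuousOn.preimage_isClosed_of_isClosed
      (hψcont.mono (Set.Icc_subset_Icc hx.1 le_rfl)) isClosed_Icc isClosed_Iic
  obtain ⟨b, hbS, hbLe⟩ := hS2.exists_isLeast
    ⟨R, ⟨hxR.le, le_rfl⟩, hψR.le⟩
  have hax : a < x := lt_of_le_of_ne haS.1.2 (fun h => by rw [h] at haS; linarith [haS.2])
  have hxb : x < b := lt_of_le_of_ne (hbS.1.1) (fun h => by rw [← h] at hbS; linarith [hbS.2])
  have hab : a < b := hax.trans hxb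
  have hKa : K ≤ a := haS.1.1
  have hbR : b ≤ R := hbS.1.2
  have hsub : Set.Icc a b ⊆ s := Set.Icc_subset_Icc hKa hbR
  -- ψ > 0 on Ioo a b
  have hpos : ∀ y ∈ Set.Ioo a b, 0 < ψ y := by
    intro y hy
    by_contra h
    push_neg at h
    rcases le_total y x with hyx | hxy
    · have : y ∈ {y ∈ Set.Icc K x | ψ y ≤ 0} := ⟨⟨hKa.trans hy.1.le, hyx⟩, h⟩
      exact absurd (haGr this) (not_le.2 hy.1)
    · have : y ∈ {y ∈ Set.Icc x R | ψ y ≤ 0} := ⟨⟨hxy, hy.2.le.trans hbR⟩, h⟩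
      exact absurd (hbLe this) (not_le.2 hy.2)
  -- ψ is convex on Icc a b
  have hconv : ConvexOn ℝ (Set.Icc a b) ψ := by
    apply convexOn_of_hasDerivWithinAt2_nonneg (convex_Icc a b) (hψcont.mono hsub)
      (f' := fun y => f y + θ * B y) (f'' := fun y => f' y - θ ^ 2 * B y)
    · rw [interior_Icc]
      intro y hy
      have hys : y ∈ s := hsub ⟨hy.1.le, hy.2.le⟩
      have h := ((hφ1 y hys).sub (hBderiv y).hasDerivWithinAt).mono hsub
      have h2 : HasDerivWithinAt ψ (f y - -θ * B y) (Set.Ioo a b) y :=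
        h.mono Set.Ioo_subset_Icc_self
      convert h2 using 1; ring
    · rw [interior_Icc]
      intro y hy
      have hys : y ∈ s := hsub ⟨hy.1.le, hy.2.le⟩
      have h := ((hφ2 y hys).add ((hBderiv y).const_mul θ).hasDerivWithinAt).mono hsub
      have h2 : HasDerivWithinAt (fun y => f y + θ * B y) (f' y + θ * (-θ * B y))
          (Set.Ioo a b) y := h.mono Set.Ioo_subset_Icc_self
      convert h2 using 1; ring
    · rw [interior_Icc]
      intro y hy
      have hys : y ∈ s := hsub ⟨hy.1.le, hy.2.le⟩
      have hψy := hpos y hy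
      have hiq := hineq y hys
      rw [abs_le] at hiq
      have h3 : W y * φ y - ε * Real.exp (-θ * y) ≤ f' y := by
        have := hiq.2; linarith
      have hW2 := hWlow y hys
      have hφy : B y < φ y := by simp only [hψdef] at hψy; linarith
      have hφypos : 0 < φ y := (hBpos y).trans hφy
      have hexp : B y = M * (Real.exp (-θ * y) * Real.exp (θ * K)) := by
        simp only [hBdef]; rw [← Real.exp_add]; ring_nf
      have hexpK : (1:ℝ) ≤ Real.exp (θ * K) := Real.one_le_exp (by positivity)
      have hE : 0 < Real.exp (-θ * y) := Real.exp_pos _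
      have hMε : ε ≤ θ ^ 2 * M := by
        have hrw : θ ^ 2 * (ε / θ ^ 2) = ε := by field_simp
        have : θ ^ 2 * M = θ ^ 2 * |φ K| + ε + θ ^ 2 * δ := by
          simp only [hM]; rw [mul_add, mul_add, hrw]
        nlinarith [abs_nonneg (φ K)]
      have h5 : ε * Real.exp (-θ * y) ≤ θ ^ 2 * B y := by
        rw [hexp]
        have h5a := mul_le_mul_of_nonneg_right hMε hE.le
        have h5b : θ ^ 2 * M * Real.exp (-θ * y) * 1
            ≤ θ ^ 2 * M * Real.exp (-θ * y) * Real.exp (θ * K) :=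
          mul_le_mul_of_nonneg_left hexpK (by positivity)
        nlinarith [h5a, h5b]
      have h6 : 2 * θ ^ 2 * φ y ≤ W y * φ y :=
        mul_le_mul_of_nonneg_right hW2 hφypos.le
      have h7 : 2 * θ ^ 2 * B y ≤ 2 * θ ^ 2 * φ y :=
        mul_le_mul_of_nonneg_left hφy.le (by positivity)
      linarith
  -- contradiction via convexity
  have hxseg : x ∈ segment ℝ a b := by
    rw [segment_eq_Icc hab.le]; exact ⟨hax.le, hxb.le⟩
  have hfin := hconv.le_on_segment (Set.left_mem_Icc.2 hab.le) (Set.right_mem_Icc.2 hab.le) hxseg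
  have : ψ x ≤ 0 := hfin.trans (max_le haS.2 hbS.2)
  linarith

/-- One-sided barrier bound, slack removed. -/
lemma barrier_aux'
    (θ K R ε : ℝ) (hθ : 0 < θ) (hK : 0 ≤ K) (hKR : K < R) (hε : 0 ≤ ε)
    (W φ : ℝ → ℝ)
    (hWlow : ∀ x ∈ Set.Icc K R, 2 * θ ^ 2 ≤ W x)
    (hφ : ContDiffOn ℝ 2 φ (Set.Icc K R))
    (hφR : φ R = 0)
    (hineq : ∀ x ∈ Set.Icc K R,
      |(-derivWithin (derivWithin φ (Set.Icc K R)) (Set.Icc K R) x + W x * φ x)|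
        ≤ ε * Real.exp (-θ * x)) :
    ∀ x ∈ Set.Icc K R,
      φ x ≤ (|φ K| + ε / θ ^ 2) * Real.exp (-θ * (x - K)) := by
  intro x hx
  have hE : 0 < Real.exp (-θ * (x - K)) := Real.exp_pos _
  refine le_of_forall_pos_le_add fun η hη => ?_
  have hδ : 0 < η / Real.exp (-θ * (x - K)) := by positivity
  have h := barrier_aux θ K R ε (η / Real.exp (-θ * (x - K))) hθ hK hKR hε hδ
    W φ hWlow hφ hφR hineq x hx
  have hcalc : (|φ K| + ε / θ ^ 2 + η / Real.exp (-θ * (x - K))) * Real.exp (-θ * (x - K))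
      = (|φ K| + ε / θ ^ 2) * Real.exp (-θ * (x - K)) + η := by
    field_simp
  linarith [hcalc ▸ h]

/-- **Barrier argument (end of Section 3).** If `W ≥ 2θ²` on `[K, R]`, `φ(R) = 0` and
`|−φ'' + W φ| ≤ ε e^{−θ x}` on `[K, R]`, then
`|φ x| ≤ (|φ K| + ε/θ²) e^{−θ(x − K)}` on `[K, R]`. -/
theorem barrier_decay_estimate
    (θ K R ε : ℝ) (hθ : 0 < θ) (hK : 0 ≤ K) (hKR : K < R) (hε : 0 ≤ ε)
    (W φ : ℝ → ℝ)
    (hW : ContinuousOn W (Set.Icc K R))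
    (hWlow : ∀ x ∈ Set.Icc K R, 2 * θ ^ 2 ≤ W x)
    (hφ : ContDiffOn ℝ 2 φ (Set.Icc K R))
    (hφR : φ R = 0)
    (hineq : ∀ x ∈ Set.Icc K R,
      |(-derivWithin (derivWithin φ (Set.Icc K R)) (Set.Icc K R) x + W x * φ x)|
        ≤ ε * Real.exp (-θ * x)) :
    ∀ x ∈ Set.Icc K R,
      |φ x| ≤ (|φ K| + ε / θ ^ 2) * Real.exp (-θ * (x - K)) := by
  intro x hx
  set s : Set ℝ := Set.Icc K R with hs
  have huniq : UniqueDiffOn ℝ s := uniqueDiffOn_Icc hKR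
  have hupper := barrier_aux' θ K R ε hθ hK hKR hε W φ hWlow hφ hφR hineq x hx
  -- apply to -φ
  have hneg1 : ∀ y ∈ s, derivWithin (fun z => -φ z) s y = -derivWithin φ s y := by
    intro y hy
    exact derivWithin.neg
  have hneg2 : ∀ y ∈ s,
      derivWithin (derivWithin (fun z => -φ z) s) s y
        = -derivWithin (derivWithin φ s) s y := by
    intro y hy
    have h1 : derivWithin (derivWithin (fun z => -φ z) s) s y
        = derivWithin (fun z => -derivWithin φ s z) s y := by
      apply derivWithin_congr hneg1 (hneg1 y hy)
    rw [h1]; exact derivWithin.neg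
  have hineqneg : ∀ y ∈ s,
      |(-derivWithin (derivWithin (fun z => -φ z) s) s y + W y * (-φ y))|
        ≤ ε * Real.exp (-θ * y) := by
    intro y hy
    rw [hneg2 y hy]
    have : -(-derivWithin (derivWithin φ s) s y) + W y * -φ y
        = -(-derivWithin (derivWithin φ s) s y + W y * φ y) := by ring
    rw [this, abs_neg]
    exact hineq y hy
  have hlower := barrier_aux' θ K R ε hθ hK hKR hε W (fun z => -φ z) hWlow hφ.neg
    (by simp [hφR]) hineqneg x hx
  simp only [abs_neg] at hlower
  rw [abs_le]
  constructor
  · linarith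
  · exact hupper
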